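/- Let X be a random vector in ℝ^d with mean a, covariance matrix V whose eigenvalues are σ₁², …, σ_d², and finite relative entropy D = D(X‖Z) to the standard normal Z. Then: (a) |a|² ≤ 2D; (b) |σᵢ² − 1| ≤ 4√D + 16D for every i ≤ d; (c) |E|X|² − d| ≤ 4d√D + 16d·D. -/

import Mathlib

open Real MeasureTheory Matrix
open scoped RealInnerProductSpace


/-- `t - 1 - log t ≥ (√t - 1)^2` for `t > 0`. -/
lemma aux_sub_one_sub_log (t : ℝ) (ht : 0 < t) : (Real.sqrt t - 1) ^ 2 ≤ t - 1 - Real.log t := by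
  have h1 : Real.log (Real.sqrt t) ≤ Real.sqrt t - 1 :=
    Real.log_le_sub_one_of_pos (Real.sqrt_pos.2 ht)
  have h2 : Real.log (Real.sqrt t) = Real.log t / 2 := Real.log_sqrt ht.le
  have h3 : Real.sqrt t ^ 2 = t := Real.sq_sqrt ht.le
  nlinarith [h1, h2, h3]

lemma aux_min_bound (r : ℝ) (hr : 0 ≤ r) :
    min |r ^ 2 - 1| ((r ^ 2 - 1) ^ 2) ≤ 8 * (r - 1) ^ 2 := by
  rcases le_or_gt ((r + 1) ^ 2) 8 with h | h
  · refine le_trans (min_le_right _ _) ?_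
    nlinarith [sq_nonneg (r - 1)]
  · refine le_trans (min_le_left _ _) ?_
    have hr9 : 9 ≤ 7 * r := by nlinarith
    have h1 : |r ^ 2 - 1| = r ^ 2 - 1 := by
      rw [abs_of_nonneg]; nlinarith
    rw [h1]; nlinarith

/-- combined: for `t > 0`, `min |t-1| (t-1)^2 ≤ 8 * (t - 1 - log t)`. -/
lemma aux_min_le_g (t : ℝ) (ht : 0 < t) :
    min |t - 1| ((t - 1) ^ 2) ≤ 8 * (t - 1 - Real.log t) := by
  have h := aux_min_bound (Real.sqrt t) (Real.sqrt_nonneg t)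
  rw [Real.sq_sqrt ht.le] at h
  nlinarith [aux_sub_one_sub_log t ht]


lemma aux_integrable_p (p : EuclideanSpace ℝ (Fin d) → ℝ) (hp_int : ∫ x, p x = 1) :
    Integrable p := by
  by_contra h
  rw [integral_undef h] at hp_int
  norm_num at hp_int

lemma aux_integrable_mul (p : EuclideanSpace ℝ (Fin d) → ℝ)
    (hp_meas : Measurable p) (hp_nonneg : ∀ x, 0 ≤ p x)
    (hp1 : Integrable p) (hp2 : Integrable (fun x => ‖x‖ ^ 2 * p x))
    (f : EuclideanSpace ℝ (Fin d) → ℝ) (hf : Continuous f) (A B : ℝ)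
    (hbound : ∀ x, |f x| ≤ A + B * ‖x‖ ^ 2) :
    Integrable (fun x => f x * p x) := by
  have hg : Integrable (fun x => A * p x + B * (‖x‖ ^ 2 * p x)) :=
    (hp1.const_mul A).add (hp2.const_mul B)
  refine hg.mono ((hf.measurable.mul hp_meas).aestronglyMeasurable) (ae_of_all _ fun x => ?_)
  have h1 : ‖f x * p x‖ = |f x| * p x := by
    rw [norm_mul, Real.norm_eq_abs, Real.norm_eq_abs, abs_of_nonneg (hp_nonneg x)]
  rw [h1]
  refine le_trans (mul_le_mul_of_nonneg_right (hbound x) (hp_nonneg x)) ?_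
  rw [Real.norm_eq_abs]
  refine le_trans ?_ (le_abs_self _)
  ring_nf
  nlinarith [hp_nonneg x, sq_nonneg ‖x‖, hp_nonneg x]


-- Parseval
lemma aux_parseval (u : OrthonormalBasis (Fin d) ℝ (EuclideanSpace ℝ (Fin d)))
    (v : EuclideanSpace ℝ (Fin d)) : ∑ j, ⟪v, u j⟫ ^ 2 = ‖v‖ ^ 2 := by
  have h1 : ‖u.repr v‖ = ‖v‖ := u.repr.norm_map v
  rw [← h1, EuclideanSpace.norm_eq, Real.sq_sqrt (by positivity)]
  refine Finset.sum_congr rfl fun j _ => ?_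
  rw [u.repr_apply_apply, real_inner_comm, Real.norm_eq_abs, sq_abs]

lemma aux_cont_inner (u : EuclideanSpace ℝ (Fin d)) :
    Continuous fun x : EuclideanSpace ℝ (Fin d) => ⟪x, u⟫ :=
  continuous_id.inner continuous_const

lemma aux_inner_le (u : EuclideanSpace ℝ (Fin d)) (hu : ‖u‖ = 1)
    (x : EuclideanSpace ℝ (Fin d)) : |⟪x, u⟫| ≤ ‖x‖ := by
  have := abs_real_inner_le_norm x u
  rwa [hu, mul_one] at this

-- 1-d gaussian: integral and integrability
lemma aux_gauss1d (s b : ℝ) (hs : 0 < s) :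
    (∫ y : ℝ, (Real.sqrt (2 * π * s))⁻¹ * Real.exp (-(y - b) ^ 2 / (2 * s))) = 1 ∧
    Integrable (fun y : ℝ => (Real.sqrt (2 * π * s))⁻¹ * Real.exp (-(y - b) ^ 2 / (2 * s))) := by
  have h2s : (0:ℝ) < 1 / (2 * s) := by positivity
  have hfun : ∀ y : ℝ, Real.exp (-(y) ^ 2 / (2 * s)) = Real.exp (-(1 / (2 * s)) * y ^ 2) := by
    intro y; congr 1; field_simp
  have hint : Integrable (fun y : ℝ => Real.exp (-(y - b) ^ 2 / (2 * s))) := by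
    have := (integrable_exp_neg_mul_sq h2s).comp_sub_right b
    refine this.congr (ae_of_all _ fun y => ?_)
    simp only [hfun]
  constructor
  · rw [MeasureTheory.integral_const_mul]
    have h1 : (∫ y : ℝ, Real.exp (-(y - b) ^ 2 / (2 * s)))
        = ∫ y : ℝ, Real.exp (-(1 / (2 * s)) * y ^ 2) := by
      have := integral_sub_right_eq_self (μ := volume) (fun y => Real.exp (-(y) ^ 2 / (2 * s))) b
      rw [this]
      exact integral_congr_ae (ae_of_all _ fun y => hfun y)
    rw [h1, integral_gaussian]
    have : π / (1 / (2 * s)) = 2 * π * s := by field_simp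
    rw [this]
    have hpos : (0:ℝ) < 2 * π * s := by positivity
    rw [inv_mul_cancel₀ (by positivity : Real.sqrt (2 * π * s) ≠ 0)]
  · exact hint.const_mul _


lemma aux_q_integral (d : ℕ) (s bv : Fin d → ℝ) (hs : ∀ j, 0 < s j)
    (u : OrthonormalBasis (Fin d) ℝ (EuclideanSpace ℝ (Fin d))) :
    (∫ x : EuclideanSpace ℝ (Fin d),
      ∏ j, (Real.sqrt (2 * π * s j))⁻¹ * Real.exp (-(⟪x, u j⟫ - bv j) ^ 2 / (2 * s j))) = 1 ∧
    Integrable (fun x : EuclideanSpace ℝ (Fin d) =>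
      ∏ j, (Real.sqrt (2 * π * s j))⁻¹ * Real.exp (-(⟪x, u j⟫ - bv j) ^ 2 / (2 * s j))) := by
  set g : Fin d → ℝ → ℝ := fun j t => (Real.sqrt (2 * π * s j))⁻¹ *
      Real.exp (-(t - bv j) ^ 2 / (2 * s j)) with hg
  set G : EuclideanSpace ℝ (Fin d) → ℝ := fun y => ∏ j, g j (y j) with hG
  have hq_eq : ∀ x : EuclideanSpace ℝ (Fin d),
      (∏ j, (Real.sqrt (2 * π * s j))⁻¹ * Real.exp (-(⟪x, u j⟫ - bv j) ^ 2 / (2 * s j)))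
        = G (u.repr x) := by
    intro x
    refine Finset.prod_congr rfl fun j _ => ?_
    rw [u.repr_apply_apply, real_inner_comm]
  have hmp : MeasurePreserving (⇑u.repr) volume volume := u.measurePreserving_repr
  have hemb : MeasurableEmbedding (⇑u.repr) :=
    u.repr.toHomeomorph.measurableEmbedding
  -- G on EuclideanSpace vs Pi
  have hmp2 : MeasurePreserving (⇑(MeasurableEquiv.toLp 2 (Fin d → ℝ)))
      volume volume := (EuclideanSpace.volume_preserving_symm_measurableEquiv_toLp (Fin d)).symm
  have hemb2 : MeasurableEmbedding (⇑(MeasurableEquiv.toLp 2 (Fin d → ℝ))) :=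
    (MeasurableEquiv.toLp 2 (Fin d → ℝ)).measurableEmbedding
  have hGpi : ∀ y : Fin d → ℝ, G ((MeasurableEquiv.toLp 2 (Fin d → ℝ)) y)
      = ∏ j, g j (y j) := fun y => rfl
  have hgint : ∀ j, Integrable (g j) := fun j => (aux_gauss1d (s j) (bv j) (hs j)).2
  have hPi_int : Integrable (fun y : Fin d → ℝ => ∏ j, g j (y j)) :=
    Integrable.fintype_prod hgint
  have hG_int : Integrable G := by
    rw [← hmp2.integrable_comp_emb hemb2]
    exact hPi_int.congr (ae_of_all _ fun y => (hGpi y).symm)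
  constructor
  · rw [integral_congr_ae (ae_of_all _ hq_eq), hmp.integral_comp hemb,
      ← hmp2.integral_comp hemb2]
    rw [integral_congr_ae (ae_of_all _ fun y => hGpi y)]
    rw [integral_fintype_prod_volume_eq_prod g]
    exact Finset.prod_eq_one fun j _ => (aux_gauss1d (s j) (bv j) (hs j)).1
  · have : Integrable (G ∘ ⇑u.repr) := (hmp.integrable_comp_emb hemb).2 hG_int
    exact this.congr (ae_of_all _ fun x => (hq_eq x).symm)
lemma aux_const (d : ℕ) :
    (∏ _j : Fin d, (Real.sqrt (2 * π))⁻¹) = (2 * π : ℝ) ^ (-(d : ℝ) / 2) := by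
  rw [Finset.prod_const, Finset.card_univ, Fintype.card_fin]
  rw [Real.sqrt_eq_rpow, ← Real.rpow_neg_one ((2 * π) ^ ((1:ℝ)/2)),
    ← Real.rpow_mul (by positivity), ← Real.rpow_natCast ((2*π) ^ ((1:ℝ)/2 * -1)) d,
    ← Real.rpow_mul (by positivity)]
  congr 1; push_cast; ring

lemma aux_exp_neg_half_log (s : ℝ) (hs : 0 < s) :
    Real.exp (-(1/2) * Real.log s) = (Real.sqrt s)⁻¹ := by
  rw [show -(1/2) * Real.log s = Real.log s * (-(1/2)) by ring,
    ← Real.rpow_def_of_pos hs, show (-(1/2) : ℝ) = -(1/2) from rfl,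
    Real.rpow_neg hs.le, Real.sqrt_eq_rpow]
set_option maxHeartbeats 1000000 in
lemma aux_master (d : ℕ) (p φ : EuclideanSpace ℝ (Fin d) → ℝ)
    (hφ : φ = fun x => (2 * π) ^ (-(d : ℝ) / 2) * Real.exp (-‖x‖ ^ 2 / 2))
    (hp_meas : Measurable p) (hp_nonneg : ∀ x, 0 ≤ p x)
    (hp_int : ∫ x, p x = 1)
    (hp2 : Integrable (fun x => ‖x‖ ^ 2 * p x))
    (u : OrthonormalBasis (Fin d) ℝ (EuclideanSpace ℝ (Fin d)))
    (b lam : Fin d → ℝ)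
    (hmean : ∀ j, ∫ x, (⟪x, u j⟫ - b j) * p x = 0)
    (hvar : ∀ j, ∫ x, (⟪x, u j⟫ - b j) ^ 2 * p x = lam j)
    (D : ℝ) (hD : D = ∫ x, p x * Real.log (p x / φ x))
    (hD_int : Integrable (fun x => p x * Real.log (p x / φ x)))
    (s : Fin d → ℝ) (hs : ∀ j, 0 < s j) :
    ∑ j, (-(1/2) * Real.log (s j) - lam j / (2 * s j) + lam j / 2 + (b j) ^ 2 / 2) ≤ D := by
  have hp1 : Integrable p := aux_integrable_p p hp_int
  set c : Fin d → EuclideanSpace ℝ (Fin d) → ℝ := fun j x => ⟪x, u j⟫ - b j with hc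
  have hc_cont : ∀ j, Continuous (c j) := fun j =>
    (aux_cont_inner (u j)).sub continuous_const
  have habs : ∀ j x, |c j x| ≤ ‖x‖ + |b j| := by
    intro j x
    have h1 := aux_inner_le (u j) (u.orthonormal.1 j) x
    calc |c j x| ≤ |⟪x, u j⟫| + |b j| := abs_sub _ _
      _ ≤ ‖x‖ + |b j| := by linarith
  have hc_bd : ∀ j x, |c j x| ≤ (|b j| + 1) + 1 * ‖x‖ ^ 2 := by
    intro j x
    nlinarith [habs j x, norm_nonneg x, sq_nonneg (‖x‖ - 1)]
  have hc2_bd : ∀ j x, |(c j x) ^ 2| ≤ 2 * (b j) ^ 2 + 2 * ‖x‖ ^ 2 := by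
    intro j x
    rw [abs_of_nonneg (sq_nonneg _)]
    have h3 : (c j x) ^ 2 ≤ (‖x‖ + |b j|) ^ 2 := by
      rw [← sq_abs (c j x)]
      exact pow_le_pow_left₀ (abs_nonneg _) (habs j x) 2
    nlinarith [sq_nonneg (‖x‖ - |b j|), sq_abs (b j)]
  have int_c : ∀ j, Integrable (fun x => c j x * p x) := fun j =>
    aux_integrable_mul p hp_meas hp_nonneg hp1 hp2 (c j) (hc_cont j) _ _ (hc_bd j)
  have int_c2 : ∀ j, Integrable (fun x => (c j x) ^ 2 * p x) := fun j =>
    aux_integrable_mul p hp_meas hp_nonneg hp1 hp2 (fun x => (c j x) ^ 2)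
      ((hc_cont j).pow 2) _ _ (hc2_bd j)
  set α : Fin d → ℝ := fun j => -(1/2) * Real.log (s j) + (b j) ^ 2 / 2 with hα
  set γ : Fin d → ℝ := fun j => 1/2 - 1 / (2 * s j) with hγ
  set L : EuclideanSpace ℝ (Fin d) → ℝ :=
    fun x => ∑ j, (α j + b j * c j x + γ j * (c j x) ^ 2) with hL
  have int_term : ∀ j : Fin d, Integrable
      (fun x => α j * p x + b j * (c j x * p x) + γ j * ((c j x) ^ 2 * p x)) := fun j =>
    ((hp1.const_mul (α j)).add ((int_c j).const_mul (b j))).add ((int_c2 j).const_mul (γ j))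
  have hpL_eq : ∀ x, p x * L x =
      ∑ j, (α j * p x + b j * (c j x * p x) + γ j * ((c j x) ^ 2 * p x)) := by
    intro x
    rw [hL, Finset.mul_sum]
    exact Finset.sum_congr rfl fun j _ => by ring
  have int_pL : Integrable (fun x => p x * L x) := by
    refine (integrable_finset_sum (Finset.univ : Finset (Fin d))
      (fun j _ => int_term j)).congr (ae_of_all _ fun x => (hpL_eq x).symm)
  have val_pL : (∫ x, p x * L x) = ∑ j, (α j + γ j * lam j) := by
    rw [integral_congr_ae (ae_of_all _ hpL_eq),
      integral_finset_sum _ (fun j _ => int_term j)]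
    refine Finset.sum_congr rfl fun j _ => ?_
    have i1 : Integrable (fun x => α j * p x) := hp1.const_mul _
    have i2 : Integrable (fun x => b j * (c j x * p x)) := (int_c j).const_mul _
    have i3 : Integrable (fun x => γ j * ((c j x) ^ 2 * p x)) := (int_c2 j).const_mul _
    have i12 : Integrable (fun x => α j * p x + b j * (c j x * p x)) := i1.add i2
    rw [integral_add i12 i3, integral_add i1 i2, integral_const_mul, integral_const_mul,
      integral_const_mul]
    simp only [hc]
    rw [hp_int, hmean j, hvar j]
    ring
  -- the Gaussian q
  set q : EuclideanSpace ℝ (Fin d) → ℝ := fun x =>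
    ∏ j, (Real.sqrt (2 * π * s j))⁻¹ * Real.exp (-(c j x) ^ 2 / (2 * s j)) with hq
  have hq_pos : ∀ x, 0 < q x := by
    intro x
    refine Finset.prod_pos fun j _ => mul_pos (inv_pos.2 (Real.sqrt_pos.2 ?_)) (Real.exp_pos _)
    exact mul_pos (by positivity) (hs j)
  have hφ_pos : ∀ x, 0 < φ x := by
    intro x; rw [hφ]
    have h2π : (0:ℝ) < 2 * π := by positivity
    exact mul_pos (Real.rpow_pos_of_pos h2π _) (Real.exp_pos _)
  have hqint := aux_q_integral d s b hs u
  have int_q : Integrable q := by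
    simp only [hq, hc]; exact hqint.2
  have val_q : (∫ x, q x) = 1 := by
    simp only [hq, hc]; exact hqint.1
  -- identity q = φ * exp L
  have hqφ : ∀ x, q x = φ x * Real.exp (L x) := by
    intro x
    have hnorm : ‖x‖ ^ 2 = ∑ j, (c j x + b j) ^ 2 := by
      rw [← aux_parseval u x]
      exact Finset.sum_congr rfl fun j _ => by simp only [hc]; ring
    have key : ∀ j : Fin d, (Real.sqrt (2 * π * s j))⁻¹ * Real.exp (-(c j x) ^ 2 / (2 * s j))
        = (Real.sqrt (2 * π))⁻¹ * Real.exp (-(c j x + b j) ^ 2 / 2) *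
          Real.exp (α j + b j * c j x + γ j * (c j x) ^ 2) := by
      intro j
      have hsj := hs j
      have h1 : Real.sqrt (2 * π * s j) = Real.sqrt (2 * π) * Real.sqrt (s j) :=
        Real.sqrt_mul (by positivity) _
      have h2 : -(c j x + b j) ^ 2 / 2 + (α j + b j * c j x + γ j * (c j x) ^ 2)
          = -(1/2) * Real.log (s j) + (-(c j x) ^ 2 / (2 * s j)) := by
        simp only [hα, hγ]
        field_simp
        ring
      have e1 : (Real.sqrt (2 * π))⁻¹ * Real.exp (-(c j x + b j) ^ 2 / 2) *
          Real.exp (α j + b j * c j x + γ j * (c j x) ^ 2)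
          = (Real.sqrt (2 * π))⁻¹ *
            Real.exp (-(c j x + b j) ^ 2 / 2 + (α j + b j * c j x + γ j * (c j x) ^ 2)) := by
        rw [mul_assoc, ← Real.exp_add]
      rw [e1, h2, Real.exp_add, aux_exp_neg_half_log _ hsj, h1, mul_inv]
      ring
    calc q x = ∏ j, ((Real.sqrt (2 * π))⁻¹ * Real.exp (-(c j x + b j) ^ 2 / 2) *
          Real.exp (α j + b j * c j x + γ j * (c j x) ^ 2)) :=
        Finset.prod_congr rfl fun j _ => key j
      _ = (∏ _j : Fin d, (Real.sqrt (2 * π))⁻¹) *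
          (∏ j, Real.exp (-(c j x + b j) ^ 2 / 2)) *
          (∏ j, Real.exp (α j + b j * c j x + γ j * (c j x) ^ 2)) := by
        rw [Finset.prod_mul_distrib, Finset.prod_mul_distrib]
      _ = φ x * Real.exp (L x) := by
        rw [aux_const, ← Real.exp_sum, ← Real.exp_sum, hφ]
        simp only [hL]
        congr 2
        rw [hnorm]
        simp [Finset.sum_div, neg_div]
  -- pointwise Gibbs inequality
  have hptwise : ∀ x, p x - q x ≤ p x * Real.log (p x / φ x) - p x * L x := by
    intro x
    rcases eq_or_lt_of_le (hp_nonneg x) with h0 | hpos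
    · rw [← h0]
      simp only [zero_sub, zero_mul, sub_zero, sub_self]
      linarith [hq_pos x]
    · have hqx := hq_pos x
      have hφx := hφ_pos x
      have hlq : Real.log (q x) = Real.log (φ x) + L x := by
        rw [hqφ x, Real.log_mul (ne_of_gt hφx) (Real.exp_ne_zero _), Real.log_exp]
      have hlpφ : Real.log (p x / φ x) = Real.log (p x) - Real.log (φ x) :=
        Real.log_div (ne_of_gt hpos) (ne_of_gt hφx)
      have hlpq : 1 - q x / p x ≤ Real.log (p x) - Real.log (q x) := by
        have h1 : Real.log (q x / p x) ≤ q x / p x - 1 :=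
          Real.log_le_sub_one_of_pos (div_pos hqx hpos)
        rw [Real.log_div (ne_of_gt hqx) (ne_of_gt hpos)] at h1
        linarith
      have h2 : p x - q x ≤ p x * (Real.log (p x) - Real.log (q x)) := by
        calc p x - q x = p x * (1 - q x / p x) := by field_simp
          _ ≤ p x * (Real.log (p x) - Real.log (q x)) :=
            mul_le_mul_of_nonneg_left hlpq hpos.le
      have h3 : p x * Real.log (p x / φ x) - p x * L x
          = p x * (Real.log (p x) - Real.log (q x)) := by
        rw [hlpφ, hlq]; ring
      linarith
  -- integrate
  have hint1 : Integrable (fun x => p x - q x) := hp1.sub int_q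
  have hint2 : Integrable (fun x => p x * Real.log (p x / φ x) - p x * L x) :=
    hD_int.sub int_pL
  have hmono := integral_mono hint1 hint2 hptwise
  rw [integral_sub hp1 int_q, integral_sub hD_int int_pL, hp_int, val_q, val_pL] at hmono
  rw [hD]
  have hterm : ∀ j : Fin d,
      -(1/2) * Real.log (s j) - lam j / (2 * s j) + lam j / 2 + (b j) ^ 2 / 2
        = α j + γ j * lam j := by
    intro j; simp only [hα, hγ]; ring
  rw [Finset.sum_congr rfl fun j _ => hterm j]
  linarith

lemma aux_inner_coords {d : ℕ} (x y : EuclideanSpace ℝ (Fin d)) :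
    ⟪x, y⟫ = ∑ i, x i * y i := by
  simp [PiLp.inner_apply, RCLike.inner_apply, conj_trivial, mul_comm]

lemma aux_coord_cont {d : ℕ} (i : Fin d) :
    Continuous (fun x : EuclideanSpace ℝ (Fin d) => x i) :=
  (EuclideanSpace.proj (𝕜 := ℝ) i).continuous

lemma aux_coord_le {d : ℕ} (x : EuclideanSpace ℝ (Fin d)) (i : Fin d) : |x i| ≤ ‖x‖ := by
  rw [EuclideanSpace.norm_eq, ← Real.sqrt_sq_eq_abs]
  apply Real.sqrt_le_sqrt
  have := Finset.single_le_sum (f := fun j => ‖x j‖ ^ 2)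
    (fun j _ => sq_nonneg _) (Finset.mem_univ i)
  simpa [Real.norm_eq_abs, sq_abs] using this

example {d : ℕ} (hV : (0 : Matrix (Fin d) (Fin d) ℝ).IsHermitian) (j i : Fin d) :
   True := trivial

-- eigen component lemma
lemma aux_eigen_comp {d : ℕ} (V : Matrix (Fin d) (Fin d) ℝ) (hV : V.IsHermitian) (j i : Fin d) :
    (∑ k, V i k * hV.eigenvectorBasis j k) = hV.eigenvalues j * hV.eigenvectorBasis j i := by
  have h := hV.mulVec_eigenvectorBasis j
  have := congrFun h i
  simpa [Matrix.mulVec, dotProduct] using this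
set_option maxHeartbeats 2000000 in
theorem moment_bounds_from_relative_entropy (d : ℕ) (hd : 1 ≤ d)
    (p : EuclideanSpace ℝ (Fin d) → ℝ)
    (φ : EuclideanSpace ℝ (Fin d) → ℝ)
    (hφ : φ = fun x => (2 * π) ^ (-(d : ℝ) / 2) * Real.exp (-‖x‖ ^ 2 / 2))
    (hp_meas : Measurable p) (hp_nonneg : ∀ x, 0 ≤ p x)
    (hp_int : ∫ x, p x = 1)
    (hp2_int : Integrable (fun x => ‖x‖ ^ 2 * p x))
    (a : EuclideanSpace ℝ (Fin d)) (V : Matrix (Fin d) (Fin d) ℝ)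
    (hV : V.IsHermitian)
    (ha : ∀ i, ∫ x, x i * p x = a i)
    (hVcov : ∀ i j, ∫ x, (x i - a i) * (x j - a j) * p x = V i j)
    (σ : Fin d → ℝ) (hσ : ∀ i, hV.eigenvalues i = σ i ^ 2)
    (D : ℝ) (hD : D = ∫ x, p x * Real.log (p x / φ x))
    (hD_int : Integrable (fun x => p x * Real.log (p x / φ x))) :
    ‖a‖ ^ 2 ≤ 2 * D ∧
    (∀ i, |σ i ^ 2 - 1| ≤ 4 * Real.sqrt D + 16 * D) ∧
    |(∫ x, ‖x‖ ^ 2 * p x) - d| ≤ 4 * d * Real.sqrt D + 16 * d * D := by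
  have hp1 : Integrable p := aux_integrable_p p hp_int
  set u : OrthonormalBasis (Fin d) ℝ (EuclideanSpace ℝ (Fin d)) := hV.eigenvectorBasis with hu
  set lam : Fin d → ℝ := hV.eigenvalues with hlam
  set b : Fin d → ℝ := fun j => ⟪a, u j⟫ with hb
  -- basic integrability
  have int_xi : ∀ i, Integrable (fun x => x i * p x) := by
    intro i
    refine aux_integrable_mul p hp_meas hp_nonneg hp1 hp2_int _ (aux_coord_cont i) 1 1 ?_
    intro x
    nlinarith [aux_coord_le x i, norm_nonneg x, sq_nonneg (‖x‖ - 1), abs_nonneg (x i)]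
  have int_xij : ∀ i k, Integrable (fun x => (x i - a i) * (x k - a k) * p x) := by
    intro i k
    refine aux_integrable_mul p hp_meas hp_nonneg hp1 hp2_int _
      (((aux_coord_cont i).sub continuous_const).mul
        ((aux_coord_cont k).sub continuous_const)) (2 * ‖a‖ ^ 2) 2 ?_
    intro x
    have h1 : |x i - a i| ≤ ‖x‖ + ‖a‖ := by
      linarith [abs_sub (x i) (a i), aux_coord_le x i, aux_coord_le a i]
    have h2 : |x k - a k| ≤ ‖x‖ + ‖a‖ := by
      linarith [abs_sub (x k) (a k), aux_coord_le x k, aux_coord_le a k]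
    have h3 : |(x i - a i) * (x k - a k)| ≤ (‖x‖ + ‖a‖) ^ 2 := by
      rw [abs_mul]
      nlinarith [abs_nonneg (x i - a i), abs_nonneg (x k - a k)]
    nlinarith [sq_nonneg (‖x‖ - ‖a‖)]
  -- mean identity
  have hmean : ∀ j, ∫ x, (⟪x, u j⟫ - b j) * p x = 0 := by
    intro j
    have heq : ∀ x : EuclideanSpace ℝ (Fin d), (⟪x, u j⟫ - b j) * p x
        = (∑ i, u j i * (x i * p x)) + (-b j) * p x := by
      intro x
      rw [aux_inner_coords x (u j), sub_mul, Finset.sum_mul]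
      rw [show ∑ i, x i * u j i * p x = ∑ i, u j i * (x i * p x) from
        Finset.sum_congr rfl fun i _ => by ring]
      ring
    rw [integral_congr_ae (ae_of_all _ heq),
      integral_add (integrable_finset_sum _ fun i _ => (int_xi i).const_mul _)
        (hp1.const_mul _),
      integral_finset_sum _ (fun i _ => (int_xi i).const_mul _)]
    simp_rw [integral_const_mul, ha, hp_int]
    simp only [hb]
    rw [aux_inner_coords a (u j)]
    rw [show ∑ i, u j i * a i = ∑ i, a i * u j i from
      Finset.sum_congr rfl fun i _ => mul_comm _ _]
    ring
  -- variance identity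
  have hvar : ∀ j, ∫ x, (⟪x, u j⟫ - b j) ^ 2 * p x = lam j := by
    intro j
    have heig : ∀ i, (∑ k, V i k * u j k) = lam j * u j i := by
      simp only [hu, hlam]
      exact fun i => aux_eigen_comp V hV j i
    have hdiff : ∀ x : EuclideanSpace ℝ (Fin d),
        ⟪x, u j⟫ - b j = ∑ i, (x i - a i) * u j i := by
      intro x
      simp only [hb]
      rw [aux_inner_coords x (u j), aux_inner_coords a (u j), ← Finset.sum_sub_distrib]
      exact Finset.sum_congr rfl fun i _ => by ring
    have hsq : ∀ x : EuclideanSpace ℝ (Fin d), (⟪x, u j⟫ - b j) ^ 2 * p x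
        = ∑ i, ∑ k, (u j i * u j k) * ((x i - a i) * (x k - a k) * p x) := by
      intro x
      rw [hdiff x, pow_two, Finset.sum_mul_sum, Finset.sum_mul]
      refine Finset.sum_congr rfl fun i _ => ?_
      rw [Finset.sum_mul]
      exact Finset.sum_congr rfl fun k _ => by ring
    rw [integral_congr_ae (ae_of_all _ hsq),
      integral_finset_sum _ (fun i _ => integrable_finset_sum _
        (fun k _ => (int_xij i k).const_mul _))]
    have hcol : ∀ i : Fin d, (∫ x, ∑ k, (u j i * u j k) * ((x i - a i) * (x k - a k) * p x))
        = u j i * (lam j * u j i) := by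
      intro i
      rw [integral_finset_sum _ (fun k _ => (int_xij i k).const_mul _)]
      simp_rw [integral_const_mul, hVcov]
      rw [show ∑ k, u j i * u j k * V i k = u j i * ∑ k, V i k * u j k from by
        rw [Finset.mul_sum]; exact Finset.sum_congr rfl fun k _ => by ring]
      rw [heig i]
    rw [Finset.sum_congr rfl fun i _ => hcol i]
    have hones : ∑ i, u j i * u j i = 1 := by
      have h1 : ⟪u j, u j⟫ = (1:ℝ) := by
        rw [real_inner_self_eq_norm_sq, u.orthonormal.1 j]; norm_num
      rw [← h1, aux_inner_coords]
    calc ∑ i, u j i * (lam j * u j i) = lam j * ∑ i, u j i * u j i := by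
          rw [Finset.mul_sum]; exact Finset.sum_congr rfl fun i _ => by ring
      _ = lam j := by rw [hones, mul_one]
  -- nonnegativity of lam
  have lam_nonneg : ∀ j, 0 ≤ lam j := by
    intro j
    rw [← hvar j]
    exact integral_nonneg fun x => mul_nonneg (sq_nonneg _) (hp_nonneg x)
  -- master inequality instances
  have master := fun (s : Fin d → ℝ) (hs : ∀ j, 0 < s j) =>
    aux_master d p φ hφ hp_meas hp_nonneg hp_int hp2_int u b lam hmean hvar D hD hD_int s hs
  -- part (a) and D ≥ 0
  have hsum1 : ∑ j, (b j) ^ 2 / 2 ≤ D := by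
    have h := master (fun _ => 1) (fun _ => one_pos)
    calc ∑ j, (b j) ^ 2 / 2
        = ∑ j, (-(1/2) * Real.log 1 - lam j / (2 * 1) + lam j / 2 + (b j) ^ 2 / 2) := by
          refine Finset.sum_congr rfl fun j _ => ?_
          rw [Real.log_one]; ring
      _ ≤ D := h
  have hparse_a : ∑ j, (b j) ^ 2 = ‖a‖ ^ 2 := by
    simp only [hb]
    exact aux_parseval u a
  have hD0 : 0 ≤ D := by
    have : 0 ≤ ∑ j, (b j) ^ 2 / 2 :=
      Finset.sum_nonneg fun j _ => by positivity
    linarith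
  have parta : ‖a‖ ^ 2 ≤ 2 * D := by
    rw [← hparse_a]
    have h2 : ∑ j, (b j) ^ 2 = 2 * ∑ j, (b j) ^ 2 / 2 := by
      rw [Finset.mul_sum]; exact Finset.sum_congr rfl fun j _ => by ring
    linarith [hsum1]
  -- positivity of lam
  have lam_pos : ∀ j, 0 < lam j := by
    intro j0
    rcases lt_or_eq_of_le (lam_nonneg j0) with h | h
    · exact h
    exfalso
    set s : Fin d → ℝ := fun j => if j = j0 then Real.exp (-(2*D+2)) else 1 with hsdef
    have hs : ∀ j, 0 < s j := by
      intro j; rw [hsdef]; dsimp only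
      split
      · exact Real.exp_pos _
      · exact one_pos
    have hmas := master s hs
    have hterm_nonneg : ∀ j : Fin d, j ∈ Finset.univ →
        0 ≤ -(1/2) * Real.log (s j) - lam j / (2 * s j) + lam j / 2 + (b j) ^ 2 / 2 := by
      intro j _
      rw [hsdef]; dsimp only
      by_cases hj : j = j0
      · rw [if_pos hj, Real.log_exp, hj, ← h]
        have : (0:ℝ) / (2 * Real.exp (-(2*D+2))) = 0 := zero_div _
        rw [this]
        nlinarith [sq_nonneg (b j0), hD0]
      · rw [if_neg hj, Real.log_one]
        have h5 : lam j / (2 * 1) = lam j / 2 := by norm_num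
        rw [h5]
        nlinarith [sq_nonneg (b j)]
    have hj0 : -(1/2) * Real.log (s j0) - lam j0 / (2 * s j0) + lam j0 / 2 + (b j0) ^ 2 / 2
        ≤ ∑ j, (-(1/2) * Real.log (s j) - lam j / (2 * s j) + lam j / 2 + (b j) ^ 2 / 2) :=
      Finset.single_le_sum hterm_nonneg (Finset.mem_univ j0)
    have hval : D + 1 ≤ -(1/2) * Real.log (s j0) - lam j0 / (2 * s j0) + lam j0 / 2
        + (b j0) ^ 2 / 2 := by
      rw [hsdef]; dsimp only
      rw [if_pos rfl, Real.log_exp, ← h]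
      have h6 : (0:ℝ) / (2 * Real.exp (-(2*D+2))) = 0 := zero_div _
      rw [h6]
      nlinarith [sq_nonneg (b j0)]
    linarith
  -- master with s = lam
  have hsum2 : ∑ j, ((lam j - 1 - Real.log (lam j)) / 2 + (b j) ^ 2 / 2) ≤ D := by
    have h := master lam lam_pos
    calc ∑ j, ((lam j - 1 - Real.log (lam j)) / 2 + (b j) ^ 2 / 2)
        = ∑ j, (-(1/2) * Real.log (lam j) - lam j / (2 * lam j) + lam j / 2 + (b j) ^ 2 / 2) := by
          refine Finset.sum_congr rfl fun j _ => ?_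
          have hne : lam j ≠ 0 := (lam_pos j).ne'
          field_simp
          ring
      _ ≤ D := h
  have g_nonneg : ∀ j, 0 ≤ lam j - 1 - Real.log (lam j) := by
    intro j
    nlinarith [aux_sub_one_sub_log (lam j) (lam_pos j), sq_nonneg (Real.sqrt (lam j) - 1)]
  have g_le : ∀ j0, lam j0 - 1 - Real.log (lam j0) ≤ 2 * D := by
    intro j0
    have hterm : ∀ j ∈ (Finset.univ : Finset (Fin d)),
        0 ≤ (lam j - 1 - Real.log (lam j)) / 2 + (b j) ^ 2 / 2 := fun j _ =>
      add_nonneg (by linarith [g_nonneg j]) (by positivity)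
    have h := Finset.single_le_sum hterm (Finset.mem_univ j0)
    nlinarith [sq_nonneg (b j0), hsum2]
  have sqrt16D : Real.sqrt (16 * D) = 4 * Real.sqrt D := by
    rw [show (16:ℝ) * D = 4 ^ 2 * D by norm_num, Real.sqrt_mul (by positivity) D,
      Real.sqrt_sq (by norm_num : (0:ℝ) ≤ 4)]
  have hmin16 : ∀ j, min |lam j - 1| ((lam j - 1) ^ 2) ≤ 16 * D := by
    intro j
    have h1 := aux_min_le_g (lam j) (lam_pos j)
    linarith [g_le j]
  have key_abs : ∀ j, |lam j - 1| ≤ 4 * Real.sqrt D + min |lam j - 1| ((lam j - 1) ^ 2) := by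
    intro j
    rcases min_cases (|lam j - 1|) ((lam j - 1) ^ 2) with ⟨he, _⟩ | ⟨he, hlt⟩
    · rw [he]
      have : 0 ≤ 4 * Real.sqrt D := by positivity
      linarith
    · rw [he]
      have h2 : (lam j - 1) ^ 2 ≤ 16 * D := by rw [← he]; exact hmin16 j
      have h3 : |lam j - 1| ≤ 4 * Real.sqrt D := by
        rw [← Real.sqrt_sq_eq_abs, ← sqrt16D]
        exact Real.sqrt_le_sqrt h2
      nlinarith [sq_nonneg (lam j - 1)]
  -- part (b)
  have partb : ∀ i, |σ i ^ 2 - 1| ≤ 4 * Real.sqrt D + 16 * D := by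
    intro i
    rw [← hσ i]
    calc |lam i - 1| ≤ 4 * Real.sqrt D + min |lam i - 1| ((lam i - 1) ^ 2) := key_abs i
      _ ≤ 4 * Real.sqrt D + 16 * D := by linarith [hmin16 i]
  -- part (c): second moment identity
  have habsc : ∀ j x, |⟪x, u j⟫ - b j| ≤ ‖x‖ + |b j| := by
    intro j x
    have h1 := aux_inner_le (u j) (u.orthonormal.1 j) x
    calc |⟪x, u j⟫ - b j| ≤ |⟪x, u j⟫| + |b j| := abs_sub _ _
      _ ≤ ‖x‖ + |b j| := by linarith
  have int_cj : ∀ j, Integrable (fun x => (⟪x, u j⟫ - b j) * p x) := by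
    intro j
    refine aux_integrable_mul p hp_meas hp_nonneg hp1 hp2_int _
      ((aux_cont_inner (u j)).sub continuous_const) (|b j| + 1) 1 ?_
    intro x
    nlinarith [habsc j x, norm_nonneg x, sq_nonneg (‖x‖ - 1)]
  have int_cj2 : ∀ j, Integrable (fun x => (⟪x, u j⟫ - b j) ^ 2 * p x) := by
    intro j
    refine aux_integrable_mul p hp_meas hp_nonneg hp1 hp2_int _
      (((aux_cont_inner (u j)).sub continuous_const).pow 2) (2 * (b j) ^ 2) 2 ?_
    intro x
    rw [abs_of_nonneg (sq_nonneg _)]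
    have h3 : (⟪x, u j⟫ - b j) ^ 2 ≤ (‖x‖ + |b j|) ^ 2 := by
      rw [← sq_abs]
      exact pow_le_pow_left₀ (abs_nonneg _) (habsc j x) 2
    nlinarith [sq_nonneg (‖x‖ - |b j|), sq_abs (b j)]
  have hxsq : ∀ x : EuclideanSpace ℝ (Fin d), ‖x‖ ^ 2 * p x
      = ∑ j, ((⟪x, u j⟫ - b j) ^ 2 * p x + (2 * b j) * ((⟪x, u j⟫ - b j) * p x)
        + (b j) ^ 2 * p x) := by
    intro x
    rw [← aux_parseval u x, Finset.sum_mul]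
    exact Finset.sum_congr rfl fun j _ => by ring
  have hEj : ∀ j : Fin d, (∫ x, ((⟪x, u j⟫ - b j) ^ 2 * p x
      + (2 * b j) * ((⟪x, u j⟫ - b j) * p x) + (b j) ^ 2 * p x)) = lam j + (b j) ^ 2 := by
    intro j
    have i1 : Integrable (fun x => (⟪x, u j⟫ - b j) ^ 2 * p x) := int_cj2 j
    have i2 : Integrable (fun x => (2 * b j) * ((⟪x, u j⟫ - b j) * p x)) :=
      (int_cj j).const_mul _
    have i3 : Integrable (fun x => (b j) ^ 2 * p x) := hp1.const_mul _
    have i12 : Integrable (fun x => (⟪x, u j⟫ - b j) ^ 2 * p x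
        + (2 * b j) * ((⟪x, u j⟫ - b j) * p x)) := i1.add i2
    rw [integral_add i12 i3, integral_add i1 i2, integral_const_mul, integral_const_mul,
      hvar j, hmean j, hp_int]
    ring
  have intsum : ∀ j : Fin d, Integrable (fun x => (⟪x, u j⟫ - b j) ^ 2 * p x
      + (2 * b j) * ((⟪x, u j⟫ - b j) * p x) + (b j) ^ 2 * p x) := fun j =>
    ((int_cj2 j).add ((int_cj j).const_mul _)).add (hp1.const_mul _)
  have hE : (∫ x, ‖x‖ ^ 2 * p x) = (∑ j, lam j) + ‖a‖ ^ 2 := by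
    rw [integral_congr_ae (ae_of_all _ hxsq),
      integral_finset_sum _ (fun j _ => intsum j),
      Finset.sum_congr rfl fun j _ => hEj j, Finset.sum_add_distrib, hparse_a]
  have hcard : (Finset.univ : Finset (Fin d)).card = d := by simp
  have habs_each : ∀ j, |lam j - 1| ≤ 4 * Real.sqrt D
      + 8 * (lam j - 1 - Real.log (lam j)) := by
    intro j
    have h1 := key_abs j
    have h2 := aux_min_le_g (lam j) (lam_pos j)
    linarith
  have hsumabs : ∑ j, |lam j - 1| ≤ d * (4 * Real.sqrt D)
      + 8 * ∑ j, (lam j - 1 - Real.log (lam j)) := by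
    calc ∑ j, |lam j - 1|
        ≤ ∑ j, (4 * Real.sqrt D + 8 * (lam j - 1 - Real.log (lam j))) :=
          Finset.sum_le_sum fun j _ => habs_each j
      _ = d * (4 * Real.sqrt D) + 8 * ∑ j, (lam j - 1 - Real.log (lam j)) := by
          rw [Finset.sum_add_distrib, Finset.sum_const, hcard, nsmul_eq_mul, Finset.mul_sum]
  have hgsum : ∑ j, (lam j - 1 - Real.log (lam j)) ≤ 2 * D - ‖a‖ ^ 2 := by
    have h1 : ∑ j, ((lam j - 1 - Real.log (lam j)) / 2 + (b j) ^ 2 / 2)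
        = (∑ j, (lam j - 1 - Real.log (lam j))) / 2 + (∑ j, (b j) ^ 2) / 2 := by
      rw [Finset.sum_add_distrib, Finset.sum_div, Finset.sum_div]
    rw [h1, hparse_a] at hsum2
    linarith
  have hEd : (∫ x, ‖x‖ ^ 2 * p x) - d = (∑ j, (lam j - 1)) + ‖a‖ ^ 2 := by
    rw [hE, Finset.sum_sub_distrib, Finset.sum_const, hcard, nsmul_eq_mul, mul_one]
    ring
  have hd1 : (1:ℝ) ≤ d := by exact_mod_cast hd
  have partc : |(∫ x, ‖x‖ ^ 2 * p x) - d| ≤ 4 * d * Real.sqrt D + 16 * d * D := by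
    rw [hEd]
    have h1 : |(∑ j, (lam j - 1)) + ‖a‖ ^ 2| ≤ (∑ j, |lam j - 1|) + ‖a‖ ^ 2 := by
      calc |(∑ j, (lam j - 1)) + ‖a‖ ^ 2| ≤ |∑ j, (lam j - 1)| + |‖a‖ ^ 2| := abs_add_le _ _
        _ ≤ (∑ j, |lam j - 1|) + ‖a‖ ^ 2 := by
            rw [abs_of_nonneg (sq_nonneg ‖a‖)]
            exact add_le_add_left (Finset.abs_sum_le_sum_abs _ _) _
    have h2 : (∑ j, |lam j - 1|) + ‖a‖ ^ 2
        ≤ d * (4 * Real.sqrt D) + 8 * (2 * D - ‖a‖ ^ 2) + ‖a‖ ^ 2 := by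
      linarith [hsumabs, hgsum]
    have h3 : d * (4 * Real.sqrt D) + 8 * (2 * D - ‖a‖ ^ 2) + ‖a‖ ^ 2
        ≤ 4 * d * Real.sqrt D + 16 * d * D := by
      nlinarith [sq_nonneg ‖a‖, hD0, Real.sqrt_nonneg D]
    linarith
  exact ⟨parta, partb, partc⟩
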